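/- Characterization of Sp(2n; A): Let A be a 2n×2n real positive definite matrix with distinct symplectic eigenvalues μ₁ < ⋯ < μ_r and index sets α_i = {j : d_j(A) = μ_i}, and let S ∈ Sp(2n; A) be fixed. Then a 2n×2n matrix Ŝ belongs to Sp(2n; A) if and only if Ŝ = SQ where Q = Q_{[1]} ⊕ˢ ⋯ ⊕ˢ Q_{[r]} and each Q_{[i]} is a 2|α_i|×2|α_i| orthosymplectic matrix. -/

import Mathlib

open Matrix
open scoped Matrix.Norms.L2Operator Classical

/-- The canonical symplectic form matrix `((0, Iₘ), (−Iₘ, 0))` (the paper's `J₂ₘ`). -/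
def J' (m : Type*) [Fintype m] [DecidableEq m] : Matrix (m ⊕ m) (m ⊕ m) ℝ :=
  Matrix.fromBlocks 0 1 (-1) 0

open Polynomial

section auxlemmas
variable {m : Type*} [Fintype m] [DecidableEq m]

lemma J'_mul_inl (M : Matrix (m ⊕ m) (m ⊕ m) ℝ) (a : m) (y : m ⊕ m) :
    (J' m * M) (Sum.inl a) y = M (Sum.inr a) y := by
  simp [J', Matrix.mul_apply, Fintype.sum_sum_type, Matrix.one_apply]

lemma J'_mul_inr (M : Matrix (m ⊕ m) (m ⊕ m) ℝ) (a : m) (y : m ⊕ m) :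
    (J' m * M) (Sum.inr a) y = -(M (Sum.inl a) y) := by
  simp [J', Matrix.mul_apply, Fintype.sum_sum_type, Matrix.one_apply]

lemma J'_mul_J' : J' m * J' m = -1 := by
  simp [J', Matrix.fromBlocks_multiply, ← Matrix.fromBlocks_one, Matrix.fromBlocks_neg]

end auxlemmas

lemma det_conj_diag {ι : Type*} [Fintype ι] [DecidableEq ι] (Q Qi : Matrix ι ι ℝ)
    (h1 : Qi * Q = 1) (h2 : Q * Qi = 1) (v w : ι → ℝ)
    (h : Matrix.diagonal w = Qi * Matrix.diagonal v * Q) :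
    Multiset.map v Finset.univ.val = Multiset.map w Finset.univ.val := by
  have key : Matrix.diagonal (fun x => (X : ℝ[X]) - C (w x))
      = (Qi.map C) * Matrix.diagonal (fun x => (X : ℝ[X]) - C (v x)) * (Q.map C) := by
    have e1 : ∀ u : ι → ℝ, Matrix.diagonal (fun x => (X : ℝ[X]) - C (u x))
        = (X : ℝ[X]) • (1 : Matrix ι ι ℝ[X]) - (Matrix.diagonal u).map C := by
      intro u
      rw [Matrix.smul_one_eq_diagonal, Matrix.diagonal_map (by simp), ← Matrix.diagonal_sub]
    rw [e1, e1, Matrix.mul_sub, Matrix.sub_mul, ← Matrix.map_mul, ← Matrix.map_mul, ← h]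
    congr 1
    rw [Matrix.mul_smul, Matrix.smul_mul, Matrix.mul_one, ← Matrix.map_mul, h1,
      Matrix.map_one C (by simp) (by simp)]
  have hdet := congrArg Matrix.det key
  rw [Matrix.det_mul, Matrix.det_mul, mul_comm, ← mul_assoc, ← Matrix.det_mul, ← Matrix.map_mul,
    h2, Matrix.map_one C (by simp) (by simp), Matrix.det_one, one_mul,
    Matrix.det_diagonal, Matrix.det_diagonal] at hdet
  have hprod : ∀ u : ι → ℝ, ∏ x : ι, ((X : ℝ[X]) - C (u x))
      = ((Multiset.map u Finset.univ.val).map (fun a => (X : ℝ[X]) - C a)).prod := by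
    intro u
    rw [Multiset.map_map, Finset.prod_eq_multiset_prod]
    rfl
  rw [hprod, hprod] at hdet
  have := congrArg Polynomial.roots hdet
  rw [Polynomial.roots_multiset_prod_X_sub_C, Polynomial.roots_multiset_prod_X_sub_C] at this
  exact this.symm

lemma mono_eq_of_multiset {n : ℕ} {f g : Fin n → ℝ} (hf : Monotone f) (hg : Monotone g)
    (h : Multiset.map f Finset.univ.val = Multiset.map g Finset.univ.val) : f = g := by
  rw [Fin.univ_val_map, Fin.univ_val_map] at h
  exact List.ofFn_injective
    (List.Perm.eq_of_sortedLE hf.sortedLE_ofFn hg.sortedLE_ofFn (Multiset.coe_eq_coe.mp h))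

/-- The canonical embedding of the `i`-th eigenvalue block indices. -/
def emb {n r : ℕ} (d : Fin n → ℝ) (μ : Fin r → ℝ) (i : Fin r) :
    ({a : Fin n // d a = μ i} ⊕ {a : Fin n // d a = μ i}) → (Fin n ⊕ Fin n) :=
  Sum.map Subtype.val Subtype.val

theorem aux_char (n r : ℕ)
    (A : Matrix (Fin n ⊕ Fin n) (Fin n ⊕ Fin n) ℝ)
    (d : Fin n → ℝ) (μ : Fin r → ℝ)
    (hd : Monotone d) (hdpos : ∀ j, 0 < d j) (hμ : StrictMono μ)
    (hdμ : ∀ j, ∃ i, d j = μ i) (hμd : ∀ i, ∃ j, d j = μ i)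
    (S : Matrix (Fin n ⊕ Fin n) (Fin n ⊕ Fin n) ℝ)
    (hS : Sᵀ * J' (Fin n) * S = J' (Fin n))
    (hSA : Sᵀ * A * S = Matrix.fromBlocks (Matrix.diagonal d) 0 0 (Matrix.diagonal d))
    (Shat : Matrix (Fin n ⊕ Fin n) (Fin n ⊕ Fin n) ℝ) :
    (Shatᵀ * J' (Fin n) * Shat = J' (Fin n) ∧
      ∃ e : Fin n → ℝ, Monotone e ∧ (∀ j, 0 < e j) ∧
        Shatᵀ * A * Shat = Matrix.fromBlocks (Matrix.diagonal e) 0 0 (Matrix.diagonal e)) ↔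
    ∃ Q : Matrix (Fin n ⊕ Fin n) (Fin n ⊕ Fin n) ℝ,
      (∀ i i' : Fin r, i ≠ i' → Q.submatrix (emb d μ i) (emb d μ i') = 0) ∧
      (∀ i : Fin r,
        (Q.submatrix (emb d μ i) (emb d μ i))ᵀ * Q.submatrix (emb d μ i) (emb d μ i) = 1 ∧
        (Q.submatrix (emb d μ i) (emb d μ i))ᵀ * J' {a : Fin n // d a = μ i} *
          Q.submatrix (emb d μ i) (emb d μ i) = J' {a : Fin n // d a = μ i}) ∧
      Shat = S * Q := by
  classical
  have hμpos : ∀ i, 0 < μ i := fun i => by obtain ⟨j, hj⟩ := hμd i; exact hj ▸ hdpos j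
  have hddpos : ∀ x : Fin n ⊕ Fin n, 0 < Sum.elim d d x := by rintro (a | a) <;> exact hdpos a
  have hddμ : ∀ x : Fin n ⊕ Fin n, ∃ i, Sum.elim d d x = μ i := by rintro (a | a) <;> exact hdμ a
  have heminj : ∀ i : Fin r, Function.Injective (emb d μ i) :=
    fun i => Subtype.val_injective.sumMap Subtype.val_injective
  have hdem : ∀ (i : Fin r) (z : {a : Fin n // d a = μ i} ⊕ {a : Fin n // d a = μ i}),
      Sum.elim d d (emb d μ i z) = μ i := by rintro i (b | b) <;> exact b.2
  have hrepr : ∀ (i : Fin r) (x : Fin n ⊕ Fin n), Sum.elim d d x = μ i →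
      ∃ x', emb d μ i x' = x := by
    rintro i (a | a) h
    · exact ⟨Sum.inl ⟨a, h⟩, rfl⟩
    · exact ⟨Sum.inr ⟨a, h⟩, rfl⟩
  have hJzero : ∀ x y : Fin n ⊕ Fin n, Sum.elim d d x ≠ Sum.elim d d y → J' (Fin n) x y = 0 := by
    rintro (a | a) (b | b) h
    · simp [J']
    · simp only [J', Matrix.fromBlocks_apply₁₂]
      exact Matrix.one_apply_ne fun hc => h (by rw [hc]; rfl)
    · simp only [J', Matrix.fromBlocks_apply₂₁, Matrix.neg_apply]
      rw [Matrix.one_apply_ne fun hc => h (by rw [hc]; rfl), neg_zero]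
    · simp [J']
  have hJem : ∀ (i : Fin r) (x y : {a : Fin n // d a = μ i} ⊕ {a : Fin n // d a = μ i}),
      J' (Fin n) (emb d μ i x) (emb d μ i y) = J' {a : Fin n // d a = μ i} x y := by
    rintro i (a | a) (b | b) <;>
      simp [J', emb, Matrix.one_apply, Subtype.val_inj]
  have hsum : ∀ (i : Fin r) (f : Fin n ⊕ Fin n → ℝ),
      (∀ z, Sum.elim d d z ≠ μ i → f z = 0) →
      ∑ z, f z = ∑ z, f (emb d μ i z) := by
    intro i f hf
    have hm := Finset.sum_map Finset.univ ⟨emb d μ i, heminj i⟩ f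
    simp only [Function.Embedding.coeFn_mk] at hm
    rw [← hm]
    refine (Finset.sum_subset (Finset.subset_univ _) ?_).symm
    intro z _ hz
    refine hf z fun hc => hz ?_
    obtain ⟨x', hx'⟩ := hrepr i z hc
    exact Finset.mem_map.mpr ⟨x', Finset.mem_univ _, hx'⟩
  -- central computations
  have centralJ : ∀ (Q : Matrix (Fin n ⊕ Fin n) (Fin n ⊕ Fin n) ℝ),
      (∀ x y, Sum.elim d d x ≠ Sum.elim d d y → Q x y = 0) → ∀ (i : Fin r)
      (x y : {a : Fin n // d a = μ i} ⊕ {a : Fin n // d a = μ i}),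
      (Qᵀ * J' (Fin n) * Q) (emb d μ i x) (emb d μ i y)
        = ((Q.submatrix (emb d μ i) (emb d μ i))ᵀ * J' {a : Fin n // d a = μ i} *
            Q.submatrix (emb d μ i) (emb d μ i)) x y := by
    intro Q hz i x y
    have hL : (Qᵀ * J' (Fin n) * Q) (emb d μ i x) (emb d μ i y)
        = ∑ z, Q z (emb d μ i x) * (J' (Fin n) * Q) z (emb d μ i y) := by
      rw [Matrix.mul_assoc, Matrix.mul_apply]
      simp [Matrix.transpose_apply]
    have hR : ((Q.submatrix (emb d μ i) (emb d μ i))ᵀ * J' {a : Fin n // d a = μ i} *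
            Q.submatrix (emb d μ i) (emb d μ i)) x y
        = ∑ z, Q (emb d μ i z) (emb d μ i x) *
            (J' {a : Fin n // d a = μ i} * Q.submatrix (emb d μ i) (emb d μ i)) z y := by
      rw [Matrix.mul_assoc, Matrix.mul_apply]
      simp [Matrix.transpose_apply, Matrix.submatrix_apply]
    rw [hL, hR, hsum i _ (fun z hzz => by
      rw [hz z (emb d μ i x) (by rw [hdem i x]; exact hzz), zero_mul])]
    refine Finset.sum_congr rfl fun z _ => ?_
    congr 1
    rcases z with b | b
    · rw [show emb d μ i (Sum.inl b) = Sum.inl b.val from rfl, J'_mul_inl, J'_mul_inl]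
      rfl
    · rw [show emb d μ i (Sum.inr b) = Sum.inr b.val from rfl, J'_mul_inr, J'_mul_inr]
      rfl
  have centralD : ∀ (Q : Matrix (Fin n ⊕ Fin n) (Fin n ⊕ Fin n) ℝ),
      (∀ x y, Sum.elim d d x ≠ Sum.elim d d y → Q x y = 0) → ∀ (i : Fin r)
      (x y : {a : Fin n // d a = μ i} ⊕ {a : Fin n // d a = μ i}),
      (Qᵀ * Matrix.diagonal (Sum.elim d d) * Q) (emb d μ i x) (emb d μ i y)
        = μ i * (((Q.submatrix (emb d μ i) (emb d μ i))ᵀ *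
            Q.submatrix (emb d μ i) (emb d μ i)) x y) := by
    intro Q hz i x y
    have hL : (Qᵀ * Matrix.diagonal (Sum.elim d d) * Q) (emb d μ i x) (emb d μ i y)
        = ∑ z, Q z (emb d μ i x) * (Sum.elim d d z * Q z (emb d μ i y)) := by
      rw [Matrix.mul_assoc, Matrix.mul_apply]
      simp [Matrix.transpose_apply, Matrix.diagonal_mul]
    have hR : ((Q.submatrix (emb d μ i) (emb d μ i))ᵀ * Q.submatrix (emb d μ i) (emb d μ i)) x y
        = ∑ z, Q (emb d μ i z) (emb d μ i x) * Q (emb d μ i z) (emb d μ i y) := by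
      rw [Matrix.mul_apply]
      simp [Matrix.transpose_apply, Matrix.submatrix_apply]
    rw [hL, hR, hsum i _ (fun z hzz => by
      rw [hz z (emb d μ i x) (by rw [hdem i x]; exact hzz), zero_mul]), Finset.mul_sum]
    refine Finset.sum_congr rfl fun z _ => ?_
    rw [hdem i z]
    ring
  have centralJ0 : ∀ (Q : Matrix (Fin n ⊕ Fin n) (Fin n ⊕ Fin n) ℝ),
      (∀ x y, Sum.elim d d x ≠ Sum.elim d d y → Q x y = 0) →
      ∀ x y, Sum.elim d d x ≠ Sum.elim d d y → (Qᵀ * J' (Fin n) * Q) x y = 0 := by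
    intro Q hz x y hxy
    rw [Matrix.mul_assoc, Matrix.mul_apply]
    refine Finset.sum_eq_zero fun z _ => ?_
    by_cases hq : Sum.elim d d z = Sum.elim d d x
    · have h2 : (J' (Fin n) * Q) z y = 0 := by
        rcases z with a | a
        · rw [J'_mul_inl]
          refine hz _ _ fun hc => hxy ?_
          rw [← hq, ← hc]; rfl
        · rw [J'_mul_inr]
          rw [hz _ _ (fun hc => hxy (by rw [← hq, ← hc]; rfl) : Sum.elim d d (Sum.inl a) ≠ Sum.elim d d y), neg_zero]
      rw [h2, mul_zero]
    · rw [Matrix.transpose_apply, hz z x hq, zero_mul]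
  have centralD0 : ∀ (Q : Matrix (Fin n ⊕ Fin n) (Fin n ⊕ Fin n) ℝ),
      (∀ x y, Sum.elim d d x ≠ Sum.elim d d y → Q x y = 0) →
      ∀ x y, Sum.elim d d x ≠ Sum.elim d d y →
      (Qᵀ * Matrix.diagonal (Sum.elim d d) * Q) x y = 0 := by
    intro Q hz x y hxy
    rw [Matrix.mul_assoc, Matrix.mul_apply]
    refine Finset.sum_eq_zero fun z _ => ?_
    by_cases hq : Sum.elim d d z = Sum.elim d d x
    · rw [Matrix.diagonal_mul, hz z y (fun hc => hxy (hq.symm.trans hc)), mul_zero, mul_zero]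
    · rw [Matrix.transpose_apply, hz z x hq, zero_mul]
  have globalJ : ∀ (Q : Matrix (Fin n ⊕ Fin n) (Fin n ⊕ Fin n) ℝ),
      (∀ x y, Sum.elim d d x ≠ Sum.elim d d y → Q x y = 0) →
      (∀ i : Fin r, (Q.submatrix (emb d μ i) (emb d μ i))ᵀ * J' {a : Fin n // d a = μ i} *
          Q.submatrix (emb d μ i) (emb d μ i) = J' {a : Fin n // d a = μ i}) →
      Qᵀ * J' (Fin n) * Q = J' (Fin n) := by
    intro Q hz hb
    ext x y
    by_cases hxy : Sum.elim d d x = Sum.elim d d y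
    · obtain ⟨i, hi⟩ := hddμ x
      obtain ⟨x', hx'⟩ := hrepr i x hi
      obtain ⟨y', hy'⟩ := hrepr i y (hxy.symm.trans hi)
      rw [← hx', ← hy', centralJ Q hz i x' y', hb i, hJem]
    · rw [centralJ0 Q hz x y hxy, hJzero x y hxy]
  have globalD : ∀ (Q : Matrix (Fin n ⊕ Fin n) (Fin n ⊕ Fin n) ℝ),
      (∀ x y, Sum.elim d d x ≠ Sum.elim d d y → Q x y = 0) →
      (∀ i : Fin r, (Q.submatrix (emb d μ i) (emb d μ i))ᵀ *
          Q.submatrix (emb d μ i) (emb d μ i) = 1) →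
      Qᵀ * Matrix.diagonal (Sum.elim d d) * Q = Matrix.diagonal (Sum.elim d d) := by
    intro Q hz hb
    ext x y
    by_cases hxy : Sum.elim d d x = Sum.elim d d y
    · obtain ⟨i, hi⟩ := hddμ x
      obtain ⟨x', hx'⟩ := hrepr i x hi
      obtain ⟨y', hy'⟩ := hrepr i y (hxy.symm.trans hi)
      rw [← hx', ← hy', centralD Q hz i x' y', hb i]
      by_cases hxy' : x' = y'
      · subst hxy'
        rw [Matrix.one_apply_eq, Matrix.diagonal_apply_eq, hdem, mul_one]
      · rw [Matrix.one_apply_ne hxy', Matrix.diagonal_apply_ne _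
          (fun hc => hxy' (heminj i hc)), mul_zero]
    · rw [centralD0 Q hz x y hxy, Matrix.diagonal_apply_ne _ (fun hc => hxy (by rw [hc]))]
  constructor
  · rintro ⟨hhJ, e, hemono, hepos, hhA⟩
    rw [Matrix.fromBlocks_diagonal] at hSA hhA
    have hTS : (-(J' (Fin n) * Sᵀ * J' (Fin n))) * S = 1 := by
      have h1 : J' (Fin n) * Sᵀ * J' (Fin n) * S = J' (Fin n) * (Sᵀ * J' (Fin n) * S) := by
        simp only [Matrix.mul_assoc]
      rw [Matrix.neg_mul, h1, hS, J'_mul_J', neg_neg]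
    set T := -(J' (Fin n) * Sᵀ * J' (Fin n)) with hTdef
    have hST : S * T = 1 := mul_eq_one_comm.mp hTS
    have hTSt : Tᵀ * Sᵀ = 1 := by rw [← Matrix.transpose_mul, hST, Matrix.transpose_one]
    set Q := T * Shat with hQdef
    have hSQ : S * Q = Shat := by rw [hQdef, ← Matrix.mul_assoc, hST, Matrix.one_mul]
    have hTJ : Tᵀ * J' (Fin n) * T = J' (Fin n) := by
      calc Tᵀ * J' (Fin n) * T = Tᵀ * (Sᵀ * J' (Fin n) * S) * T := by rw [hS]
        _ = (Tᵀ * Sᵀ) * J' (Fin n) * (S * T) := by simp only [Matrix.mul_assoc]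
        _ = J' (Fin n) := by rw [hTSt, hST, Matrix.one_mul, Matrix.mul_one]
    have hTD : Tᵀ * Matrix.diagonal (Sum.elim d d) * T = A := by
      calc Tᵀ * Matrix.diagonal (Sum.elim d d) * T = Tᵀ * (Sᵀ * A * S) * T := by rw [hSA]
        _ = (Tᵀ * Sᵀ) * A * (S * T) := by simp only [Matrix.mul_assoc]
        _ = A := by rw [hTSt, hST, Matrix.one_mul, Matrix.mul_one]
    have hQJ : Qᵀ * J' (Fin n) * Q = J' (Fin n) := by
      calc Qᵀ * J' (Fin n) * Q = Shatᵀ * (Tᵀ * J' (Fin n) * T) * Shat := by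
            rw [hQdef, Matrix.transpose_mul]; simp only [Matrix.mul_assoc]
        _ = J' (Fin n) := by rw [hTJ, hhJ]
    have hQD : Qᵀ * Matrix.diagonal (Sum.elim d d) * Q = Matrix.diagonal (Sum.elim e e) := by
      calc Qᵀ * Matrix.diagonal (Sum.elim d d) * Q
          = Shatᵀ * (Tᵀ * Matrix.diagonal (Sum.elim d d) * T) * Shat := by
            rw [hQdef, Matrix.transpose_mul]; simp only [Matrix.mul_assoc]
        _ = Matrix.diagonal (Sum.elim e e) := by rw [hTD, hhA]
    have hQiQ : (-(J' (Fin n) * Qᵀ * J' (Fin n))) * Q = 1 := by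
      have h1 : J' (Fin n) * Qᵀ * J' (Fin n) * Q = J' (Fin n) * (Qᵀ * J' (Fin n) * Q) := by
        simp only [Matrix.mul_assoc]
      rw [Matrix.neg_mul, h1, hQJ, J'_mul_J', neg_neg]
    set Qi := -(J' (Fin n) * Qᵀ * J' (Fin n)) with hQidef
    have hQQi : Q * Qi = 1 := mul_eq_one_comm.mp hQiQ
    have hJQt : Qi * J' (Fin n) = J' (Fin n) * Qᵀ := by
      rw [hQidef]
      calc -(J' (Fin n) * Qᵀ * J' (Fin n)) * J' (Fin n)
          = -(J' (Fin n) * Qᵀ * (J' (Fin n) * J' (Fin n))) := by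
            simp only [Matrix.neg_mul, Matrix.mul_assoc]
        _ = J' (Fin n) * Qᵀ := by rw [J'_mul_J', Matrix.mul_neg, Matrix.mul_one, neg_neg]
    have step : J' (Fin n) * Matrix.diagonal (Sum.elim e e)
        = Qi * (J' (Fin n) * Matrix.diagonal (Sum.elim d d)) * Q := by
      calc J' (Fin n) * Matrix.diagonal (Sum.elim e e)
          = J' (Fin n) * (Qᵀ * Matrix.diagonal (Sum.elim d d) * Q) := by rw [hQD]
        _ = (J' (Fin n) * Qᵀ) * Matrix.diagonal (Sum.elim d d) * Q := by
            simp only [Matrix.mul_assoc]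
        _ = (Qi * J' (Fin n)) * Matrix.diagonal (Sum.elim d d) * Q := by rw [hJQt]
        _ = Qi * (J' (Fin n) * Matrix.diagonal (Sum.elim d d)) * Q := by
            simp only [Matrix.mul_assoc]
    have conjsq : ∀ (B : Matrix (Fin n ⊕ Fin n) (Fin n ⊕ Fin n) ℝ),
        (Qi * B * Q) * (Qi * B * Q) = Qi * (B * B) * Q := by
      intro B
      calc (Qi * B * Q) * (Qi * B * Q) = Qi * B * ((Q * Qi) * (B * Q)) := by
            simp only [Matrix.mul_assoc]
        _ = Qi * (B * B) * Q := by rw [hQQi, Matrix.one_mul]; simp only [Matrix.mul_assoc]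
    have sq : (J' (Fin n) * Matrix.diagonal (Sum.elim e e)) *
          (J' (Fin n) * Matrix.diagonal (Sum.elim e e))
        = Qi * ((J' (Fin n) * Matrix.diagonal (Sum.elim d d)) *
            (J' (Fin n) * Matrix.diagonal (Sum.elim d d))) * Q := by
      rw [step, conjsq]
    have sqv : ∀ v : Fin n → ℝ,
        (J' (Fin n) * Matrix.diagonal (Sum.elim v v)) *
            (J' (Fin n) * Matrix.diagonal (Sum.elim v v))
          = -(Matrix.diagonal (Sum.elim (fun j => v j * v j) (fun j => v j * v j))) := by
      intro v
      simp only [← Matrix.fromBlocks_diagonal, J', Matrix.fromBlocks_multiply]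
      simp [Matrix.fromBlocks_neg, Matrix.diagonal_mul_diagonal]
    have key : Matrix.diagonal (Sum.elim (fun j => e j * e j) (fun j => e j * e j))
        = Qi * Matrix.diagonal (Sum.elim (fun j => d j * d j) (fun j => d j * d j)) * Q := by
      have h := sq
      rw [sqv e, sqv d] at h
      have h2 : Qi * -(Matrix.diagonal (Sum.elim (fun j => d j * d j) (fun j => d j * d j))) * Q
          = -(Qi * Matrix.diagonal (Sum.elim (fun j => d j * d j) (fun j => d j * d j)) * Q) := by
        rw [Matrix.mul_neg, Matrix.neg_mul]
      rw [h2] at h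
      exact neg_inj.mp h
    have hmult := det_conj_diag Q Qi hQiQ hQQi _ _ key
    have hsplit : ∀ f : Fin n → ℝ,
        Multiset.map (Sum.elim f f) (Finset.univ : Finset (Fin n ⊕ Fin n)).val
          = Multiset.map f Finset.univ.val + Multiset.map f Finset.univ.val := by
      intro f
      rw [← Finset.univ_disjSum_univ, Finset.val_disjSum, Multiset.disjSum,
        Multiset.map_add, Multiset.map_map, Multiset.map_map]
      simp [Function.comp]
    have hcancel : Multiset.map (fun j => d j * d j) Finset.univ.val
        = Multiset.map (fun j => e j * e j) Finset.univ.val := by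
      rw [hsplit, hsplit] at hmult
      refine Multiset.ext.mpr fun a => ?_
      have h := congrArg (Multiset.count a) hmult
      simp only [Multiset.count_add] at h
      omega
    have hde : e = d := by
      have h2 : (fun j => d j * d j) = (fun j => e j * e j) :=
        mono_eq_of_multiset
          (fun a b hab => mul_le_mul (hd hab) (hd hab) (hdpos a).le
            ((hdpos a).trans_le (hd hab)).le)
          (fun a b hab => mul_le_mul (hemono hab) (hemono hab) (hepos a).le
            ((hepos a).trans_le (hemono hab)).le) hcancel
      funext j
      have h3 := congrFun h2 j
      nlinarith [hdpos j, hepos j]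
    subst hde
    have hcomm : Q * Matrix.diagonal (Sum.elim (fun j => e j * e j) (fun j => e j * e j))
        = Matrix.diagonal (Sum.elim (fun j => e j * e j) (fun j => e j * e j)) * Q := by
      conv_lhs => rw [key]
      rw [show Q * (Qi * Matrix.diagonal (Sum.elim (fun j => e j * e j) (fun j => e j * e j)) * Q)
          = (Q * Qi) * (Matrix.diagonal (Sum.elim (fun j => e j * e j) (fun j => e j * e j)) * Q)
        from by simp only [Matrix.mul_assoc], hQQi, Matrix.one_mul]
    have hz : ∀ x y, Sum.elim e e x ≠ Sum.elim e e y → Q x y = 0 := by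
      intro x y hxy
      have h := congrFun (congrFun hcomm x) y
      rw [Matrix.mul_diagonal, Matrix.diagonal_mul] at h
      have ex : ∀ u : Fin n ⊕ Fin n, Sum.elim (fun j => e j * e j) (fun j => e j * e j) u
          = Sum.elim e e u * Sum.elim e e u := by rintro (a | a) <;> rfl
      have hne : Sum.elim (fun j => e j * e j) (fun j => e j * e j) x
          ≠ Sum.elim (fun j => e j * e j) (fun j => e j * e j) y := by
        intro hc
        apply hxy
        have hx := hddpos x
        have hy := hddpos y
        rw [ex, ex] at hc
        nlinarith
      rcases mul_eq_zero.mp (show (Sum.elim (fun j => e j * e j) (fun j => e j * e j) y -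
          Sum.elim (fun j => e j * e j) (fun j => e j * e j) x) * Q x y = 0 from by
            linear_combination h) with h0 | h0
      · exact absurd (sub_eq_zero.mp h0).symm hne
      · exact h0
    refine ⟨Q, ?_, ?_, hSQ.symm⟩
    · intro i i' hii
      ext x y
      rw [Matrix.submatrix_apply, Matrix.zero_apply]
      exact hz _ _ (by rw [hdem i x, hdem i' y]; exact fun hc => hii (hμ.injective hc))
    · intro i
      constructor
      · ext x y
        have h := centralD Q hz i x y
        rw [hQD] at h
        have h2 : Matrix.diagonal (Sum.elim e e) (emb e μ i x) (emb e μ i y)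
            = μ i * (1 : Matrix ({a : Fin n // e a = μ i} ⊕ {a : Fin n // e a = μ i}) _ ℝ) x y := by
          by_cases hxy : x = y
          · subst hxy
            rw [Matrix.diagonal_apply_eq, hdem, Matrix.one_apply_eq, mul_one]
          · rw [Matrix.diagonal_apply_ne _ (fun hc => hxy (heminj i hc)),
              Matrix.one_apply_ne hxy, mul_zero]
        rw [h2] at h
        exact (mul_left_cancel₀ (ne_of_gt (hμpos i)) h).symm
      · ext x y
        have h := centralJ Q hz i x y
        rw [hQJ, hJem] at h
        exact h.symm
  · rintro ⟨Q, hoff, hblocks, rfl⟩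
    rw [Matrix.fromBlocks_diagonal] at hSA
    have hz : ∀ x y, Sum.elim d d x ≠ Sum.elim d d y → Q x y = 0 := by
      intro x y hxy
      obtain ⟨i, hi⟩ := hddμ x
      obtain ⟨i', hi'⟩ := hddμ y
      have hne : i ≠ i' := fun hc => hxy (by rw [hi, hi', hc])
      obtain ⟨x', hx'⟩ := hrepr i x hi
      obtain ⟨y', hy'⟩ := hrepr i' y hi'
      have h := congrFun (congrFun (hoff i i' hne) x') y'
      rw [Matrix.submatrix_apply] at h
      rw [← hx', ← hy']
      exact h.trans rfl
    have hQJ : Qᵀ * J' (Fin n) * Q = J' (Fin n) := globalJ Q hz (fun i => (hblocks i).2)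
    have hQD : Qᵀ * Matrix.diagonal (Sum.elim d d) * Q = Matrix.diagonal (Sum.elim d d) :=
      globalD Q hz (fun i => (hblocks i).1)
    have hre : ∀ B : Matrix (Fin n ⊕ Fin n) (Fin n ⊕ Fin n) ℝ,
        (S * Q)ᵀ * B * (S * Q) = Qᵀ * (Sᵀ * B * S) * Q := by
      intro B
      rw [Matrix.transpose_mul]
      simp only [Matrix.mul_assoc]
    constructor
    · rw [hre, hS]
      exact hQJ
    · refine ⟨d, hd, hdpos, ?_⟩
      rw [Matrix.fromBlocks_diagonal, hre, hSA]
      exact hQD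

/-- **Characterization of `Sp(2n; A)`**: given a fixed `S ∈ Sp(2n; A)`, a matrix `Ŝ` belongs
to `Sp(2n; A)` if and only if `Ŝ = SQ` where `Q` is a symplectic direct sum of orthosymplectic
blocks `Q_[i]` of sizes `2|αᵢ| × 2|αᵢ|` (i.e. all `γᵢγᵢ'` blocks of `Q` with `i ≠ i'` vanish,
and each diagonal `γᵢγᵢ` block of `Q` is orthosymplectic). -/
theorem sp2nA_characterization (n r : ℕ)
    (A : Matrix (Fin n ⊕ Fin n) (Fin n ⊕ Fin n) ℝ) (hA : A.PosDef)
    (d : Fin n → ℝ) (μ : Fin r → ℝ)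
    (hd : Monotone d) (hdpos : ∀ j, 0 < d j) (hμ : StrictMono μ)
    (hdμ : ∀ j, ∃ i, d j = μ i) (hμd : ∀ i, ∃ j, d j = μ i)
    (S : Matrix (Fin n ⊕ Fin n) (Fin n ⊕ Fin n) ℝ)
    (hS : Sᵀ * J' (Fin n) * S = J' (Fin n))
    (hSA : Sᵀ * A * S = Matrix.fromBlocks (Matrix.diagonal d) 0 0 (Matrix.diagonal d))
    (Shat : Matrix (Fin n ⊕ Fin n) (Fin n ⊕ Fin n) ℝ) :
    (Shatᵀ * J' (Fin n) * Shat = J' (Fin n) ∧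
      ∃ e : Fin n → ℝ, Monotone e ∧ (∀ j, 0 < e j) ∧
        Shatᵀ * A * Shat = Matrix.fromBlocks (Matrix.diagonal e) 0 0 (Matrix.diagonal e)) ↔
    ∃ Q : Matrix (Fin n ⊕ Fin n) (Fin n ⊕ Fin n) ℝ,
      (∀ i i' : Fin r, i ≠ i' →
        (Q.submatrix
              (Sum.map (Subtype.val : {a : Fin n // d a = μ i} → Fin n)
                (Subtype.val : {a : Fin n // d a = μ i} → Fin n))
              (Sum.map (Subtype.val : {a : Fin n // d a = μ i'} → Fin n)
                (Subtype.val : {a : Fin n // d a = μ i'} → Fin n))) = 0) ∧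
      (∀ i : Fin r,
        (Q.submatrix
              (Sum.map (Subtype.val : {a : Fin n // d a = μ i} → Fin n)
                (Subtype.val : {a : Fin n // d a = μ i} → Fin n))
              (Sum.map (Subtype.val : {a : Fin n // d a = μ i} → Fin n)
                (Subtype.val : {a : Fin n // d a = μ i} → Fin n)))ᵀ *
          (Q.submatrix
              (Sum.map (Subtype.val : {a : Fin n // d a = μ i} → Fin n)
                (Subtype.val : {a : Fin n // d a = μ i} → Fin n))
              (Sum.map (Subtype.val : {a : Fin n // d a = μ i} → Fin n)
                (Subtype.val : {a : Fin n // d a = μ i} → Fin n))) = 1 ∧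
        (Q.submatrix
              (Sum.map (Subtype.val : {a : Fin n // d a = μ i} → Fin n)
                (Subtype.val : {a : Fin n // d a = μ i} → Fin n))
              (Sum.map (Subtype.val : {a : Fin n // d a = μ i} → Fin n)
                (Subtype.val : {a : Fin n // d a = μ i} → Fin n)))ᵀ *
          J' {a : Fin n // d a = μ i} *
          (Q.submatrix
              (Sum.map (Subtype.val : {a : Fin n // d a = μ i} → Fin n)
                (Subtype.val : {a : Fin n // d a = μ i} → Fin n))
              (Sum.map (Subtype.val : {a : Fin n // d a = μ i} → Fin n)
                (Subtype.val : {a : Fin n // d a = μ i} → Fin n))) = J' {a : Fin n // d a = μ i}) ∧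
      Shat = S * Q := by
  exact aux_char n r A d μ hd hdpos hμ hdμ hμd S hS hSA Shat
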